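/- For all n ≥ 1, the Lucas number L_n equals \sum_{j=0}^{\lfloor n/2 \rfloor} \frac{n}{n-j} \binom{n-j}{j}. -/

import Mathlib

def lucas : ℕ → ℕ
  | 0 => 2
  | 1 => 1
  | n + 2 => lucas (n + 1) + lucas n

lemma fib_sum (n : ℕ) : Nat.fib (n + 1) = ∑ j ∈ Finset.range (n / 2 + 1), (n - j).choose j := by
  rw [Nat.fib_succ_eq_sum_choose, Finset.Nat.sum_antidiagonal_eq_sum_range_succ_mk]
  rw [← Finset.sum_range_reflect]
  have e : ∀ j ∈ Finset.range (n + 1),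
      (n + 1 - 1 - j).choose (n - (n + 1 - 1 - j)) = (n - j).choose j := by
    intro j hj
    simp only [Finset.mem_range] at hj
    congr 1 <;> omega
  rw [Finset.sum_congr rfl e]
  refine (Finset.sum_subset (Finset.range_subset_range.2 (by omega)) ?_).symm
  intro j hj hj2
  simp only [Finset.mem_range] at hj hj2
  exact Nat.choose_eq_zero_of_lt (by omega)

lemma lucas_fib : ∀ n, lucas (n + 1) = Nat.fib (n + 2) + Nat.fib n
  | 0 => rfl
  | 1 => rfl
  | n + 2 => by
    rw [lucas, lucas_fib (n + 1), lucas_fib n, Nat.fib_add_two (n := n + 2),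
      Nat.fib_add_two (n := n)]
    ring

theorem lucas_eq_sum (n : ℕ) (hn : 1 ≤ n) :
    (lucas n : ℚ) =
      ∑ j ∈ Finset.range (n / 2 + 1), (n : ℚ) / ((n : ℚ) - (j : ℚ)) * ((n - j).choose j : ℚ) := by
  have hterm : ∀ j ∈ Finset.range (n / 2 + 1),
      (n : ℚ) / ((n : ℚ) - (j : ℚ)) * ((n - j).choose j : ℚ) =
      ((n - j).choose j : ℚ) + (if j = 0 then 0 else ((n - 1 - j).choose (j - 1) : ℚ)) := by
    intro j hj
    simp only [Finset.mem_range] at hj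
    have hjn : j < n := by omega
    have hne : (n : ℚ) - (j : ℚ) ≠ 0 := by
      have : (j : ℚ) < (n : ℚ) := by exact_mod_cast hjn
      linarith
    rcases eq_or_ne j 0 with rfl | hj0
    · simp [hne]
      omega
    · simp only [hj0, if_false]
      have key : (n - j : ℕ) * ((n - 1 - j).choose (j - 1)) = ((n - j).choose j) * j := by
        have h := Nat.add_one_mul_choose_eq (n - j - 1) (j - 1)
        have e1 : n - j - 1 + 1 = n - j := by omega
        have e2 : j - 1 + 1 = j := by omega
        have e3 : n - j - 1 = n - 1 - j := by omega
        rw [e1, e2, e3] at h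
        exact h
      have keyQ : ((n : ℚ) - (j : ℚ)) * ((n - 1 - j).choose (j - 1) : ℚ)
          = ((n - j).choose j : ℚ) * j := by
        have := congrArg (fun x : ℕ => (x : ℚ)) key
        push_cast [Nat.cast_sub hjn.le] at this ⊢
        convert this using 2
      rw [div_mul_eq_mul_div, div_eq_iff hne]
      linear_combination -keyQ
  rw [Finset.sum_congr rfl hterm, Finset.sum_add_distrib]
  have h1 : ∑ j ∈ Finset.range (n / 2 + 1), ((n - j).choose j : ℚ) = (Nat.fib (n + 1) : ℚ) := by
    rw [fib_sum]; push_cast; ring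
  have h2 : ∑ j ∈ Finset.range (n / 2 + 1),
      (if j = 0 then 0 else ((n - 1 - j).choose (j - 1) : ℚ)) = (Nat.fib (n - 1) : ℚ) := by
    rw [Finset.sum_range_succ']
    simp only [if_pos rfl, add_zero]
    have hsimp : ∀ i ∈ Finset.range (n / 2),
        (if i + 1 = 0 then (0:ℚ) else ((n - 1 - (i + 1)).choose (i + 1 - 1) : ℚ))
        = ((n - 2 - i).choose i : ℚ) := by
      intro i _
      simp only [Nat.add_sub_cancel, if_neg (Nat.succ_ne_zero i)]
      congr 2
      omega
    rw [Finset.sum_congr rfl hsimp]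
    rcases eq_or_lt_of_le hn with h | h
    · simp [← h]
    · have h2n : 2 ≤ n := h
      have hr : n / 2 = (n - 2) / 2 + 1 := by omega
      have hf : n - 1 = (n - 2) + 1 := by omega
      rw [hf, fib_sum, hr]
      push_cast
      ring
  rw [h1, h2]
  obtain ⟨m, rfl⟩ : ∃ m, n = m + 1 := ⟨n - 1, by omega⟩
  rw [lucas_fib m]
  push_cast
  simp
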